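/- Let (Y_n) be a Galton-Watson process with reproduction law ν satisfying ν(0) > 0 and mean m = 1. Then P^1(τ = ∞) = 0: the critical Galton-Watson process dies out almost surely. -/

import Mathlib

open MeasureTheory ProbabilityTheory Filter ENNReal
noncomputable section

/-- A Galton–Watson process: `X n i` are i.i.d. with law `ν`, and
`Y (n+1) = ∑_{i < Y n} X n i`. -/
def IsGW {Ω : Type} [MeasurableSpace Ω] (P : Measure Ω) (ν : Measure ℕ)
    (X : ℕ → ℕ → Ω → ℕ) (Y : ℕ → Ω → ℕ) : Prop :=
  (∀ n i, Measurable (X n i)) ∧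
  iIndepFun (fun p : ℕ × ℕ => X p.1 p.2) P ∧
  (∀ n i, Measure.map (X n i) P = ν) ∧
  ∀ n ω, Y (n + 1) ω = ∑ i ∈ Finset.range (Y n ω), X n i ω

section GWaux

variable {Ω : Type} [MeasurableSpace Ω]

/-- σ-algebra generated by the reproduction variables of generations `< n`. -/
def gwSig (X : ℕ → ℕ → Ω → ℕ) (n : ℕ) : MeasurableSpace Ω :=
  ⨆ p ∈ {p : ℕ × ℕ | p.1 < n}, MeasurableSpace.comap (X p.1 p.2) inferInstance

/-- σ-algebra generated by the reproduction variables of generations `≥ n`. -/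
def gwSig' (X : ℕ → ℕ → Ω → ℕ) (n : ℕ) : MeasurableSpace Ω :=
  ⨆ p ∈ {p : ℕ × ℕ | n ≤ p.1}, MeasurableSpace.comap (X p.1 p.2) inferInstance

variable {P : Measure Ω} {ν : Measure ℕ} {X : ℕ → ℕ → Ω → ℕ} {Y : ℕ → Ω → ℕ}

lemma gwSig_le (hX : ∀ n i, Measurable (X n i)) (n : ℕ) :
    gwSig X n ≤ ‹MeasurableSpace Ω› :=
  iSup₂_le fun p _ => (hX p.1 p.2).comap_le

lemma gwSig_mono {n m : ℕ} (h : n ≤ m) : gwSig X n ≤ gwSig X m :=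
  biSup_mono fun p hp => lt_of_lt_of_le hp h

lemma measurable_gwSig_X {n m i : ℕ} (h : n < m) : Measurable[gwSig X m] (X n i) :=
  measurable_iff_comap_le.mpr
    (le_biSup (fun p : ℕ × ℕ => MeasurableSpace.comap (X p.1 p.2) inferInstance)
      (show ((n, i) : ℕ × ℕ) ∈ {p : ℕ × ℕ | p.1 < m} from h))

lemma measurable_gwSig'_X {n m i : ℕ} (h : m ≤ n) : Measurable[gwSig' X m] (X n i) :=
  measurable_iff_comap_le.mpr
    (le_biSup (fun p : ℕ × ℕ => MeasurableSpace.comap (X p.1 p.2) inferInstance)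
      (show ((n, i) : ℕ × ℕ) ∈ {p : ℕ × ℕ | m ≤ p.1} from h))

lemma measurable_gwSig_Y (hGW : IsGW P ν X Y) (h0 : ∀ ω, Y 0 ω = 1) (n : ℕ) :
    Measurable[gwSig X n] (Y n) := by
  induction n with
  | zero =>
    have : Y 0 = fun _ => 1 := funext h0
    rw [this]; exact measurable_const
  | succ n ih =>
    have hY : Measurable[gwSig X (n + 1)] (Y n) := ih.mono (gwSig_mono n.le_succ) le_rfl
    have hsum : ∀ j : ℕ, Measurable[gwSig X (n + 1)]
        (fun ω => ∑ i ∈ Finset.range j, X n i ω) := fun j =>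
      Finset.measurable_sum _ fun i _ => measurable_gwSig_X (Nat.lt_succ_self n)
    refine @measurable_to_countable' ℕ Ω _ _ (gwSig X (n + 1)) _ fun k => ?_
    have hpre : Y (n + 1) ⁻¹' {k} =
        ⋃ j : ℕ, (Y n ⁻¹' {j}) ∩ ((fun ω => ∑ i ∈ Finset.range j, X n i ω) ⁻¹' {k}) := by
      ext ω
      simp only [Set.mem_preimage, Set.mem_singleton_iff, Set.mem_iUnion, Set.mem_inter_iff]
      constructor
      · intro h; exact ⟨Y n ω, rfl, by rw [← hGW.2.2.2 n ω]; exact h⟩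
      · rintro ⟨j, hj, hk⟩; rw [hGW.2.2.2 n ω, hj]; exact hk
    rw [hpre]
    exact MeasurableSet.iUnion fun j =>
      (hY (measurableSet_singleton j)).inter ((hsum j) (measurableSet_singleton k))

lemma measurable_Y (hGW : IsGW P ν X Y) (h0 : ∀ ω, Y 0 ω = 1) (n : ℕ) :
    Measurable (Y n) :=
  (measurable_gwSig_Y hGW h0 n).mono (gwSig_le hGW.1 n) le_rfl

set_option maxHeartbeats 1000000 in
lemma gw_indep (hGW : IsGW P ν X Y) (n : ℕ) : Indep (gwSig X n) (gwSig' X n) P := by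
  have := indep_iSup_of_disjoint (m := fun p : ℕ × ℕ =>
      MeasurableSpace.comap (X p.1 p.2) inferInstance)
    (fun p => (hGW.1 p.1 p.2).comap_le) hGW.2.1.iIndep
    (S := {p : ℕ × ℕ | p.1 < n}) (T := {p : ℕ × ℕ | n ≤ p.1})
    (Set.disjoint_left.mpr fun p hp hq => absurd hq (by simpa using hp))
  exact this

lemma lintegral_nat_eq_tsum {μ : Measure Ω} {f : Ω → ℕ} (hf : Measurable f) :
    ∫⁻ ω, (f ω : ℝ≥0∞) ∂μ = ∑' k : ℕ, (k : ℝ≥0∞) * μ (f ⁻¹' {k}) := by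
  rw [← lintegral_map (f := fun k : ℕ => (k : ℝ≥0∞)) measurable_from_top hf,
    lintegral_countable']
  refine tsum_congr fun k => ?_
  rw [Measure.map_apply hf (measurableSet_singleton k)]

lemma gw_tsum_mean (hm : ∫⁻ x, (x : ℝ≥0∞) ∂ν = 1) :
    ∑' k : ℕ, (k : ℝ≥0∞) * ν {k} = 1 := by
  rw [← lintegral_countable']; exact hm

lemma setLIntegral_X [IsProbabilityMeasure P] (hGW : IsGW P ν X Y)
    (hm : ∫⁻ x, (x : ℝ≥0∞) ∂ν = 1) {n i : ℕ} {B : Set Ω}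
    (hB : MeasurableSet[gwSig X n] B) :
    ∫⁻ ω in B, (X n i ω : ℝ≥0∞) ∂P = P B := by
  have hXm := hGW.1 n i
  rw [lintegral_nat_eq_tsum hXm]
  have hres : ∀ k : ℕ, (P.restrict B) (X n i ⁻¹' {k}) = P B * ν {k} := by
    intro k
    rw [Measure.restrict_apply (hXm (measurableSet_singleton k)), Set.inter_comm]
    rw [(Indep_iff _ _ _).mp (gw_indep hGW n) B (X n i ⁻¹' {k}) hB
      ((measurable_gwSig'_X le_rfl) (measurableSet_singleton k))]
    congr 1
    rw [← hGW.2.2.1 n i, Measure.map_apply hXm (measurableSet_singleton k)]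
  calc ∑' k : ℕ, (k : ℝ≥0∞) * (P.restrict B) (X n i ⁻¹' {k})
      = ∑' k : ℕ, P B * ((k : ℝ≥0∞) * ν {k}) := by
        refine tsum_congr fun k => ?_; rw [hres k]; ring
    _ = P B * ∑' k : ℕ, (k : ℝ≥0∞) * ν {k} := ENNReal.tsum_mul_left
    _ = P B := by rw [gw_tsum_mean hm, mul_one]

lemma setLIntegral_Y_succ [IsProbabilityMeasure P] (hGW : IsGW P ν X Y)
    (h0 : ∀ ω, Y 0 ω = 1) (hm : ∫⁻ x, (x : ℝ≥0∞) ∂ν = 1) {n : ℕ} {B : Set Ω}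
    (hB : MeasurableSet[gwSig X n] B) :
    ∫⁻ ω in B, (Y (n + 1) ω : ℝ≥0∞) ∂P = ∫⁻ ω in B, (Y n ω : ℝ≥0∞) ∂P := by
  have hX := hGW.1
  have hYn := measurable_gwSig_Y hGW h0 n
  set Bj : ℕ → Set Ω := fun j => B ∩ Y n ⁻¹' {j} with hBjdef
  have hBjm : ∀ j, MeasurableSet[gwSig X n] (Bj j) := fun j =>
    hB.inter (hYn (measurableSet_singleton j))
  have hBjamb : ∀ j, MeasurableSet (Bj j) := fun j => gwSig_le hX n _ (hBjm j)
  have hU : B = ⋃ j, Bj j := by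
    ext ω; simp [hBjdef]
  have hdisj : Pairwise (Function.onFun Disjoint Bj) := by
    intro a b hab
    refine Set.disjoint_left.mpr fun ω ha hb => hab ?_
    have h1 : Y n ω = a := ha.2
    have h2 : Y n ω = b := hb.2
    rw [← h1, h2]
  have key : ∀ j, ∫⁻ ω in Bj j, (Y (n + 1) ω : ℝ≥0∞) ∂P
      = ∫⁻ ω in Bj j, (Y n ω : ℝ≥0∞) ∂P := by
    intro j
    have e1 : ∫⁻ ω in Bj j, (Y (n + 1) ω : ℝ≥0∞) ∂P
        = ∫⁻ ω in Bj j, (∑ i ∈ Finset.range j, (X n i ω : ℝ≥0∞)) ∂P := by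
      refine setLIntegral_congr_fun (hBjamb j) (fun ω hω => ?_)
      have : Y n ω = j := hω.2
      rw [hGW.2.2.2 n ω, this, Nat.cast_sum]
    have e2 : ∫⁻ ω in Bj j, (Y n ω : ℝ≥0∞) ∂P = (j : ℝ≥0∞) * P (Bj j) := by
      rw [setLIntegral_congr_fun (hBjamb j)
        (fun ω hω => by rw [show Y n ω = j from hω.2]),
        setLIntegral_const]
    rw [e1, e2, lintegral_finset_sum (Finset.range j) (f := fun i ω => ((X n i ω : ℝ≥0∞)))
      (fun i _ => measurable_from_top.comp (hX n i))]
    calc ∑ i ∈ Finset.range j, ∫⁻ ω in Bj j, (X n i ω : ℝ≥0∞) ∂P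
        = ∑ i ∈ Finset.range j, P (Bj j) :=
          Finset.sum_congr rfl fun i _ => setLIntegral_X hGW hm (hBjm j)
      _ = (j : ℝ≥0∞) * P (Bj j) := by simp [Finset.sum_const, nsmul_eq_mul]
  rw [hU, lintegral_iUnion hBjamb hdisj, lintegral_iUnion hBjamb hdisj]
  exact tsum_congr key


lemma gw_max_bound [IsProbabilityMeasure P] (hGW : IsGW P ν X Y)
    (h0 : ∀ ω, Y 0 ω = 1) (hm : ∫⁻ x, (x : ℝ≥0∞) ∂ν = 1) {M : ℕ} (hM : 2 ≤ M) :
    P {ω | ∃ k, M ≤ Y k ω} ≤ (M : ℝ≥0∞)⁻¹ := by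
  have hX := hGW.1
  set G : ℕ → Set Ω := fun n => {ω | ∀ k ≤ n, Y k ω < M} with hGdef
  set D : ℕ → Set Ω := fun n => G n ∩ {ω | M ≤ Y (n + 1) ω} with hDdef
  have hGm : ∀ n, MeasurableSet[gwSig X n] (G n) := by
    intro n
    have hrw : G n = ⋂ k, ⋂ (_ : k ≤ n), Y k ⁻¹' (Set.Iio M) := by
      ext ω; simp [hGdef]
    rw [hrw]
    exact MeasurableSet.iInter fun k => MeasurableSet.iInter fun hk =>
      ((measurable_gwSig_Y hGW h0 k).mono (gwSig_mono hk) le_rfl)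
        (Set.to_countable _).measurableSet
  have hGamb : ∀ n, MeasurableSet (G n) := fun n => gwSig_le hX n _ (hGm n)
  have hDamb : ∀ n, MeasurableSet (D n) := fun n =>
    (hGamb n).inter ((measurable_Y hGW h0 (n + 1)) (Set.to_countable _).measurableSet)
  have key : ∀ n, (∫⁻ ω in G n, (Y n ω : ℝ≥0∞) ∂P)
      + ∑ k ∈ Finset.range n, (M : ℝ≥0∞) * P (D k) ≤ 1 := by
    intro n
    induction n with
    | zero =>
      have hG0 : G 0 = Set.univ := by
        ext ω
        simp only [hGdef, Set.mem_setOf_eq, Set.mem_univ, iff_true, Nat.le_zero]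
        rintro k rfl
        rw [h0 ω]; omega
      simp [hG0, h0, lintegral_const]
    | succ n ih =>
      have hMD : (M : ℝ≥0∞) * P (D n) ≤ ∫⁻ ω in D n, (Y (n + 1) ω : ℝ≥0∞) ∂P := by
        rw [← setLIntegral_const]
        exact setLIntegral_mono (measurable_from_top.comp (measurable_Y hGW h0 (n + 1)))
          fun ω hω => by exact_mod_cast Nat.cast_le.mpr hω.2
      have hsplit : G (n + 1) ∪ D n = G n := by
        ext ω
        simp only [hGdef, hDdef, Set.mem_union, Set.mem_setOf_eq, Set.mem_inter_iff]
        constructor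
        · rintro (h | h)
          · exact fun k hk => h k (hk.trans n.le_succ)
          · exact h.1
        · intro h
          by_cases hY : Y (n + 1) ω < M
          · left; intro k hk
            rcases Nat.lt_or_ge k (n + 1) with h' | h'
            · exact h k (Nat.lt_succ_iff.mp h')
            · have : k = n + 1 := le_antisymm hk h'
              rw [this]; exact hY
          · right; exact ⟨h, le_of_not_gt hY⟩
      have hdisj : Disjoint (G (n + 1)) (D n) := by
        refine Set.disjoint_left.mpr fun ω hg hd => ?_
        have h1 : Y (n + 1) ω < M := hg (n + 1) le_rfl
        have h2 : M ≤ Y (n + 1) ω := hd.2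
        omega
      have hmain : (∫⁻ ω in G (n + 1), (Y (n + 1) ω : ℝ≥0∞) ∂P) + (M : ℝ≥0∞) * P (D n)
          ≤ ∫⁻ ω in G n, (Y n ω : ℝ≥0∞) ∂P :=
        calc (∫⁻ ω in G (n + 1), (Y (n + 1) ω : ℝ≥0∞) ∂P) + (M : ℝ≥0∞) * P (D n)
          ≤ (∫⁻ ω in G (n + 1), (Y (n + 1) ω : ℝ≥0∞) ∂P)
            + ∫⁻ ω in D n, (Y (n + 1) ω : ℝ≥0∞) ∂P := add_le_add_right hMD _
        _ = ∫⁻ ω in G (n + 1) ∪ D n, (Y (n + 1) ω : ℝ≥0∞) ∂P :=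
            (lintegral_union (hDamb n) hdisj).symm
        _ = ∫⁻ ω in G n, (Y (n + 1) ω : ℝ≥0∞) ∂P := by rw [hsplit]
        _ = ∫⁻ ω in G n, (Y n ω : ℝ≥0∞) ∂P := setLIntegral_Y_succ hGW h0 hm (hGm n)
      calc (∫⁻ ω in G (n + 1), (Y (n + 1) ω : ℝ≥0∞) ∂P)
            + ∑ k ∈ Finset.range (n + 1), (M : ℝ≥0∞) * P (D k)
          = ((∫⁻ ω in G (n + 1), (Y (n + 1) ω : ℝ≥0∞) ∂P) + (M : ℝ≥0∞) * P (D n))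
            + ∑ k ∈ Finset.range n, (M : ℝ≥0∞) * P (D k) := by
            rw [Finset.sum_range_succ]; ring
        _ ≤ (∫⁻ ω in G n, (Y n ω : ℝ≥0∞) ∂P)
            + ∑ k ∈ Finset.range n, (M : ℝ≥0∞) * P (D k) := add_le_add_left hmain _
        _ ≤ 1 := ih
  have hsum : ∀ n, ∑ k ∈ Finset.range n, (M : ℝ≥0∞) * P (D k) ≤ 1 :=
    fun n => le_trans le_add_self (key n)
  have htsum : (M : ℝ≥0∞) * ∑' k, P (D k) ≤ 1 := by
    rw [← ENNReal.tsum_mul_left, ENNReal.tsum_eq_iSup_nat]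
    exact iSup_le hsum
  have hcover : {ω | ∃ k, M ≤ Y k ω} ⊆ ⋃ n, D n := by
    intro ω hω
    have hex : ∃ k, M ≤ Y k ω := hω
    have hspec := Nat.find_spec hex
    have hne : Nat.find hex ≠ 0 := by
      intro h
      rw [h] at hspec
      rw [h0 ω] at hspec; omega
    obtain ⟨j, hj⟩ := Nat.exists_eq_succ_of_ne_zero hne
    refine Set.mem_iUnion.mpr ⟨j, ?_, ?_⟩
    · intro l hl
      have : ¬ M ≤ Y l ω := Nat.find_min hex (by omega)
      omega
    · show M ≤ Y (j + 1) ω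
      rw [hj] at hspec; exact hspec
  have hPcover : P {ω | ∃ k, M ≤ Y k ω} ≤ ∑' k, P (D k) :=
    (measure_mono hcover).trans (measure_iUnion_le _)
  refine hPcover.trans ?_
  rw [ENNReal.le_inv_iff_mul_le]
  calc (∑' k, P (D k)) * (M : ℝ≥0∞) = (M : ℝ≥0∞) * ∑' k, P (D k) := mul_comm _ _
    _ ≤ 1 := htsum

lemma gw_bounded_extinct [IsProbabilityMeasure P] (hGW : IsGW P ν X Y)
    (h0 : ∀ ω, Y 0 ω = 1) (hν0 : 0 < ν {0}) [IsProbabilityMeasure ν] (M : ℕ) :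
    P {ω | ∀ k, Y k ω ≠ 0 ∧ Y k ω < M} = 0 := by
  have hX := hGW.1
  set q := ν {0} with hqdef
  have hq1 : q ≤ 1 := prob_le_one
  set r := 1 - q ^ M with hrdef
  have hrlt : r < 1 := ENNReal.sub_lt_self one_ne_top one_ne_zero (pow_ne_zero M hν0.ne')
  set B : ℕ → Set Ω := fun m => {ω | ∀ k ≤ m, Y k ω ≠ 0 ∧ Y k ω < M} with hBdef
  have hBm : ∀ m, MeasurableSet[gwSig X m] (B m) := by
    intro m
    have hrw : B m = ⋂ k, ⋂ (_ : k ≤ m), Y k ⁻¹' {j | j ≠ 0 ∧ j < M} := by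
      ext ω; simp [hBdef]
    rw [hrw]
    exact MeasurableSet.iInter fun k => MeasurableSet.iInter fun hk =>
      ((measurable_gwSig_Y hGW h0 k).mono (gwSig_mono hk) le_rfl)
        (Set.to_countable _).measurableSet
  have step : ∀ m, P (B (m + 1)) ≤ r * P (B m) := by
    intro m
    set C : ℕ → Set Ω := fun j => ⋂ i ∈ Finset.range j, X m i ⁻¹' {0} with hCdef
    have hCamb : ∀ j, MeasurableSet (C j) :=
      fun j => Set.Finite.measurableSet_biInter (Finset.finite_toSet _)
        fun i _ => (hX m i) (measurableSet_singleton 0)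
    have hCmeas : ∀ j, MeasurableSet[gwSig' X m] (C j) :=
      fun j => MeasurableSet.biInter (Finset.range j : Finset ℕ).countable_toSet
        fun i _ => (measurable_gwSig'_X le_rfl) (measurableSet_singleton 0)
    have hCj : ∀ j, P (C j) = q ^ j := by
      intro j
      have hmb := hGW.2.1.meas_biInter
        (S := (Finset.range j).image fun i => ((m, i) : ℕ × ℕ))
        (s := fun p => X p.1 p.2 ⁻¹' {0})
        (fun p _ => ⟨{0}, trivial, rfl⟩)
      have hseteq : (⋂ p ∈ (Finset.range j).image fun i => ((m, i) : ℕ × ℕ),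
          X p.1 p.2 ⁻¹' {0}) = C j := by
        ext ω; simp [hCdef]
      have hprod : (∏ p ∈ (Finset.range j).image fun i => ((m, i) : ℕ × ℕ),
          P (X p.1 p.2 ⁻¹' {0})) = ∏ i ∈ Finset.range j, P (X m i ⁻¹' {0}) :=
        Finset.prod_image fun a _ b _ h => by
          simpa using (Prod.mk.injEq m a m b).mp h |>.2
      have hone : ∀ i : ℕ, P (X m i ⁻¹' {0}) = q := fun i => by
        rw [hqdef, ← hGW.2.2.1 m i, Measure.map_apply (hX m i) (measurableSet_singleton 0)]
      rw [hseteq, hprod] at hmb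
      rw [hmb, Finset.prod_congr rfl fun i _ => hone i, Finset.prod_const,
        Finset.card_range]
    have cover : B (m + 1) ⊆
        ⋃ j ∈ Finset.Ico 1 M, ((B m ∩ Y m ⁻¹' {j}) ∩ (C j)ᶜ) := by
      intro ω hω
      have hωB : ∀ k ≤ m + 1, Y k ω ≠ 0 ∧ Y k ω < M := hω
      set j := Y m ω with hjdef
      have hj1 : 1 ≤ j := Nat.one_le_iff_ne_zero.mpr (hωB m m.le_succ).1
      have hjM : j < M := (hωB m m.le_succ).2
      refine Set.mem_iUnion₂.mpr ⟨j, Finset.mem_Ico.mpr ⟨hj1, hjM⟩,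
        ⟨fun k hk => hωB k (hk.trans m.le_succ), rfl⟩, ?_⟩
      intro hC
      have hzero : ∀ i ∈ Finset.range j, X m i ω = 0 := by
        intro i hi
        exact Set.mem_iInter₂.mp hC i hi
      have : Y (m + 1) ω = 0 := by
        rw [hGW.2.2.2 m ω, ← hjdef]
        exact Finset.sum_eq_zero hzero
      exact (hωB (m + 1) le_rfl).1 this
    have hBmj : ∀ j : ℕ, MeasurableSet[gwSig X m] (B m ∩ Y m ⁻¹' {j}) := fun j =>
      (hBm m).inter ((measurable_gwSig_Y hGW h0 m) (measurableSet_singleton j))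
    calc P (B (m + 1))
        ≤ ∑ j ∈ Finset.Ico 1 M, P ((B m ∩ Y m ⁻¹' {j}) ∩ (C j)ᶜ) :=
          (measure_mono cover).trans (measure_biUnion_finset_le _ _)
      _ ≤ ∑ j ∈ Finset.Ico 1 M, r * P (B m ∩ Y m ⁻¹' {j}) := by
          refine Finset.sum_le_sum fun j hj => ?_
          rw [(Indep_iff _ _ _).mp (gw_indep hGW m) _ _ (hBmj j) (hCmeas j).compl,
            mul_comm]
          refine mul_le_mul_left ?_ _
          have hcompl : P (C j)ᶜ = 1 - q ^ j := by
            rw [measure_compl (hCamb j) (measure_ne_top _ _), hCj j, measure_univ]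
          rw [hcompl, hrdef]
          refine tsub_le_tsub_left ?_ 1
          exact pow_le_pow_of_le_one (zero_le (a := q)) hq1 (le_of_lt (Finset.mem_Ico.mp hj).2)
      _ = r * ∑ j ∈ Finset.Ico 1 M, P (B m ∩ Y m ⁻¹' {j}) := (Finset.mul_sum _ _ _).symm
      _ ≤ r * P (B m) := by
          refine mul_le_mul_right ?_ r
          have hdisj : Set.PairwiseDisjoint (↑(Finset.Ico 1 M))
              (fun j => B m ∩ Y m ⁻¹' {j}) := by
            intro a _ b _ hab
            refine Set.disjoint_left.mpr fun ω ha hb => hab ?_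
            have h1 : Y m ω = a := ha.2
            have h2 : Y m ω = b := hb.2
            rw [← h1, h2]
          rw [← measure_biUnion_finset hdisj fun j _ => gwSig_le hX m _ (hBmj j)]
          exact measure_mono (Set.iUnion₂_subset fun j _ => Set.inter_subset_left)
  have hbound : ∀ m, P (B m) ≤ r ^ m := by
    intro m
    induction m with
    | zero => simpa using prob_le_one
    | succ m ih =>
      calc P (B (m + 1)) ≤ r * P (B m) := step m
        _ ≤ r * r ^ m := mul_le_mul_right ih r
        _ = r ^ (m + 1) := (pow_succ' r m).symm
  have hsub : ∀ m, {ω | ∀ k, Y k ω ≠ 0 ∧ Y k ω < M} ⊆ B m :=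
    fun m ω hω k _ => hω k
  have htends : Tendsto (fun m => r ^ m) atTop (nhds 0) :=
    ENNReal.tendsto_pow_atTop_nhds_zero_of_lt_one hrlt
  refine le_antisymm ?_ zero_le
  exact ge_of_tendsto htends (Filter.Eventually.of_forall fun m =>
    (measure_mono (hsub m)).trans (hbound m))

end GWaux

/-- The critical Galton–Watson process dies out: if ν(0) > 0 and the mean of ν
is 1, the process started from one individual goes extinct almost surely. -/
theorem stmt17 {Ω : Type} [MeasurableSpace Ω] (P : Measure Ω) [IsProbabilityMeasure P]
    (ν : Measure ℕ) [IsProbabilityMeasure ν] (hν0 : 0 < ν {0})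
    (X : ℕ → ℕ → Ω → ℕ) (Y : ℕ → Ω → ℕ)
    (hGW : IsGW P ν X Y) (h0 : ∀ ω, Y 0 ω = 1)
    (hm : ∫⁻ x, (x : ℝ≥0∞) ∂ν = 1) :
    P {ω | ∀ k, Y k ω ≠ 0} = 0 := by
  have key : ∀ M : ℕ, 2 ≤ M → P {ω | ∀ k, Y k ω ≠ 0} ≤ (M : ℝ≥0∞)⁻¹ := by
    intro M hM
    have hsub : {ω | ∀ k, Y k ω ≠ 0} ⊆
        {ω | ∀ k, Y k ω ≠ 0 ∧ Y k ω < M} ∪ {ω | ∃ k, M ≤ Y k ω} := by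
      intro ω hω
      by_cases h : ∃ k, M ≤ Y k ω
      · right; exact h
      · left; push_neg at h; exact fun k => ⟨hω k, h k⟩
    calc P {ω | ∀ k, Y k ω ≠ 0}
        ≤ P ({ω | ∀ k, Y k ω ≠ 0 ∧ Y k ω < M} ∪ {ω | ∃ k, M ≤ Y k ω}) :=
          measure_mono hsub
      _ ≤ P {ω | ∀ k, Y k ω ≠ 0 ∧ Y k ω < M} + P {ω | ∃ k, M ≤ Y k ω} :=
          measure_union_le _ _
      _ ≤ 0 + (M : ℝ≥0∞)⁻¹ :=
          add_le_add (le_of_eq (gw_bounded_extinct hGW h0 hν0 M))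
            (gw_max_bound hGW h0 hm hM)
      _ = (M : ℝ≥0∞)⁻¹ := zero_add _
  refine le_antisymm ?_ zero_le
  exact ge_of_tendsto ENNReal.tendsto_inv_nat_nhds_zero
    (Filter.eventually_atTop.mpr ⟨2, fun M hM => key M hM⟩)
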